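/- Let S be a Steiner system S(5,8,24) on a 24-element set Ω, let ∞, 0, 1 ∈ Ω be distinct points, let K₀ ∈ S be an octad with 0 ∈ K₀ and ∞ ∉ K₀, 1 ∉ K₀, and let F = {K ∈ S : ∞ ∈ K, 0 ∈ K, 1 ∉ K, |K ∩ K₀| = 4}. Then for every K ∈ F, exactly 3 of the other 27 members K' of F satisfy |K ∩ K'| = 2 (and the remaining 24 satisfy |K ∩ K'| = 4). In other words, the graph on F with adjacency |K ∩ K'| = 2 (Coxeter's graph) is 3-regular on 28 vertices. -/

import Mathlib

/-- A Steiner system `S(5,8,24)`: `Ω` has 24 elements, every block (octad) has 8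
elements, and every 5-element subset of `Ω` is contained in exactly one octad. -/
def IsSteinerSystem_5_8_24 {Ω : Type*} [Fintype Ω] [DecidableEq Ω]
    (S : Finset (Finset Ω)) : Prop :=
  Fintype.card Ω = 24 ∧
  (∀ K ∈ S, K.card = 8) ∧
  ∀ A : Finset Ω, A.card = 5 → ∃! K, K ∈ S ∧ A ⊆ K

open Finset

namespace Cox

variable {Ω : Type*} [Fintype Ω] [DecidableEq Ω]

section P1


/-- Double counting. -/
lemma dc' {α β : Type*} (s : Finset α) (t : Finset β) (r : α → β → Prop)
    [∀ a b, Decidable (r a b)] :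
    ∑ b ∈ t, (s.filter (fun a => r a b)).card = ∑ a ∈ s, (t.filter (r a)).card := by
  simp only [Finset.card_filter]; exact Finset.sum_comm

variable {S : Finset (Finset Ω)} (hS : IsSteinerSystem_5_8_24 S)

include hS

lemma lam5' (A : Finset Ω) (hA : A.card = 5) :
    (S.filter fun K => A ⊆ K).card = 1 := by
  obtain ⟨K, ⟨hK, hAK⟩, huniq⟩ := hS.2.2 A hA
  rw [Finset.card_eq_one]
  refine ⟨K, ?_⟩
  ext L
  simp only [mem_filter, mem_singleton]
  constructor
  · rintro ⟨hL, hAL⟩; exact huniq L ⟨hL, hAL⟩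
  · rintro rfl; exact ⟨hK, hAK⟩

lemma inter_le4' {K B : Finset Ω} (hK : K ∈ S) (hB : B ∈ S) (hne : K ≠ B) :
    (K ∩ B).card ≤ 4 := by
  by_contra h
  push_neg at h
  obtain ⟨A, hAsub, hA5⟩ := Finset.exists_subset_card_eq (show 5 ≤ (K ∩ B).card from h)
  obtain ⟨W, _, huniq⟩ := hS.2.2 A hA5
  have h1 : K = W := huniq K ⟨hK, hAsub.trans inter_subset_left⟩
  have h2 : B = W := huniq B ⟨hB, hAsub.trans inter_subset_right⟩
  exact hne (h1.trans h2.symm)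

lemma lam_step (A : Finset Ω) (i v : ℕ) (hA : A.card = i) (hi : i ≤ 8)
    (hv : ∀ x ∉ A, (S.filter fun K => insert x A ⊆ K).card = v) :
    (24 - i) * v = (8 - i) * (S.filter fun K => A ⊆ K).card := by
  have h := dc' S Aᶜ (fun K x => insert x A ⊆ K)
  have hL : ∑ x ∈ Aᶜ, (S.filter fun K => insert x A ⊆ K).card = (24 - i) * v := by
    rw [Finset.sum_congr rfl (fun x hx => hv x (by simpa using hx)),
      Finset.sum_const, card_compl, hA, hS.1, smul_eq_mul]
  have hR : ∑ K ∈ S, (Aᶜ.filter fun x => insert x A ⊆ K).card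
      = (8 - i) * (S.filter fun K => A ⊆ K).card := by
    have hterm : ∀ K ∈ S, (Aᶜ.filter fun x => insert x A ⊆ K).card
        = if A ⊆ K then 8 - i else 0 := by
      intro K hK
      by_cases hAK : A ⊆ K
      · have he : Aᶜ.filter (fun x => insert x A ⊆ K) = K \ A := by
          ext x
          simp only [mem_filter, mem_compl, mem_sdiff, insert_subset_iff, hAK, and_true]
          tauto
        rw [he, card_sdiff_of_subset hAK, hS.2.1 K hK, hA, if_pos hAK]
      · have he : Aᶜ.filter (fun x => insert x A ⊆ K) = ∅ := by
          ext x
          simp only [mem_filter, mem_compl, insert_subset_iff, notMem_empty, iff_false]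
          tauto
        rw [he, card_empty, if_neg hAK]
    rw [Finset.sum_congr rfl hterm, ← Finset.sum_filter, Finset.sum_const, smul_eq_mul,
      Nat.mul_comm]
  omega

lemma lam4' (A : Finset Ω) (hA : A.card = 4) :
    (S.filter fun K => A ⊆ K).card = 5 := by
  have h := lam_step hS A 4 1 hA (by norm_num) (fun x hx =>
    lam5' hS _ (by rw [card_insert_of_notMem hx, hA]))
  omega

lemma lam3' (A : Finset Ω) (hA : A.card = 3) :
    (S.filter fun K => A ⊆ K).card = 21 := by
  have h := lam_step hS A 3 5 hA (by norm_num) (fun x hx =>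
    lam4' hS _ (by rw [card_insert_of_notMem hx, hA]))
  omega

end P1

section P2
variable {S : Finset (Finset Ω)} (hS : IsSteinerSystem_5_8_24 S)
include hS

lemma no3' {K B : Finset Ω} (hK : K ∈ S) (hB : B ∈ S) (hne : K ≠ B) :
    (K ∩ B).card ≠ 3 := by
  intro hX3
  set X := K ∩ B with hXdef
  have hXK : X ⊆ K := inter_subset_left
  have hXB : X ⊆ B := inter_subset_right
  have h := dc' S (B \ X) (fun K' y => X ⊆ K' ∧ y ∈ K' ∧ K' ≠ B)
  -- LHS = 20
  have hL : ∑ y ∈ B \ X, (S.filter fun K' => X ⊆ K' ∧ y ∈ K' ∧ K' ≠ B).card = 20 := by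
    have hterm : ∀ y ∈ B \ X,
        (S.filter fun K' => X ⊆ K' ∧ y ∈ K' ∧ K' ≠ B).card = 4 := by
      intro y hy
      rw [mem_sdiff] at hy
      have he : S.filter (fun K' => X ⊆ K' ∧ y ∈ K' ∧ K' ≠ B)
          = (S.filter (fun K' => insert y X ⊆ K')).erase B := by
        ext L
        simp only [mem_filter, mem_erase, insert_subset_iff]
        tauto
      rw [he, card_erase_of_mem (by simp [mem_filter, hB, insert_subset_iff, hy.1, hXB]),
        lam4' hS _ (by rw [card_insert_of_notMem hy.2, hX3])]
    rw [Finset.sum_congr rfl hterm, Finset.sum_const, card_sdiff_of_subset hXB, hS.2.1 B hB, hX3]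
    rfl
  -- RHS
  set T := (S.filter (fun K' => X ⊆ K')).erase B with hTdef
  have hTcard : T.card = 20 := by
    rw [hTdef, card_erase_of_mem (by simp [mem_filter, hB, hXB]), lam3' hS X hX3]
  have hRsub : ∑ K' ∈ S, ((B \ X).filter fun y => X ⊆ K' ∧ y ∈ K' ∧ K' ≠ B).card
      = ∑ K' ∈ T, ((B \ X).filter fun y => X ⊆ K' ∧ y ∈ K' ∧ K' ≠ B).card := by
    refine (Finset.sum_subset ?_ ?_).symm
    · intro L hL
      rw [hTdef, mem_erase, mem_filter] at hL
      exact hL.2.1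
    · intro L hLS hLT
      have : ¬(X ⊆ L ∧ L ≠ B) := by
        intro ⟨h1, h2⟩
        exact hLT (by rw [hTdef, mem_erase, mem_filter]; exact ⟨h2, hLS, h1⟩)
      rw [Finset.card_eq_zero, Finset.filter_eq_empty_iff]
      intro y _
      tauto
  have hKT : K ∈ T := by
    rw [hTdef, mem_erase, mem_filter]; exact ⟨hne, hK, hXK⟩
  have htermK : ((B \ X).filter fun y => X ⊆ K ∧ y ∈ K ∧ K ≠ B).card = 0 := by
    rw [Finset.card_eq_zero, Finset.filter_eq_empty_iff]
    intro y hy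
    rw [mem_sdiff] at hy
    intro ⟨_, hyK, _⟩
    exact hy.2 (by rw [hXdef]; exact mem_inter.2 ⟨hyK, hy.1⟩)
  have hbound : ∀ K' ∈ T.erase K,
      ((B \ X).filter fun y => X ⊆ K' ∧ y ∈ K' ∧ K' ≠ B).card ≤ 1 := by
    intro K' hK'
    rw [mem_erase] at hK'
    obtain ⟨hK'K, hK'T⟩ := hK'
    rw [hTdef, mem_erase, mem_filter] at hK'T
    obtain ⟨hK'B, hK'S, hXK'⟩ := hK'T
    have hsub : (B \ X).filter (fun y => X ⊆ K' ∧ y ∈ K' ∧ K' ≠ B) ⊆ (K' ∩ B) \ X := by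
      intro y hy
      simp only [mem_filter, mem_sdiff, mem_inter] at hy ⊢
      tauto
    have h1 : ((K' ∩ B) \ X).card = (K' ∩ B).card - 3 := by
      rw [card_sdiff_of_subset (subset_inter hXK' hXB), hX3]
    have h2 : (K' ∩ B).card ≤ 4 := inter_le4' hS hK'S hB hK'B
    have h3 : 3 ≤ (K' ∩ B).card := by
      calc 3 = X.card := hX3.symm
      _ ≤ (K' ∩ B).card := card_le_card (subset_inter hXK' hXB)
    have := card_le_card hsub
    omega
  have hRle : ∑ K' ∈ T, ((B \ X).filter fun y => X ⊆ K' ∧ y ∈ K' ∧ K' ≠ B).card ≤ 19 := by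
    rw [← Finset.add_sum_erase T _ hKT, htermK, zero_add]
    calc ∑ K' ∈ T.erase K, ((B \ X).filter fun y => X ⊆ K' ∧ y ∈ K' ∧ K' ≠ B).card
        ≤ (T.erase K).card * 1 := Finset.sum_le_card_nsmul _ _ 1 hbound
      _ = 19 := by rw [card_erase_of_mem hKT, hTcard]
  omega

end P2

section P3
variable {S : Finset (Finset Ω)} (hS : IsSteinerSystem_5_8_24 S)
lemma card_supersets (A R : Finset Ω) (hR : R ⊆ A) {j : ℕ} (hrj : R.card ≤ j) :
    ((A.powersetCard j).filter (fun T => R ⊆ T)).card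
      = (A.card - R.card).choose (j - R.card) := by
  rw [show A.card - R.card = (A \ R).card from (card_sdiff_of_subset hR).symm,
    ← Finset.card_powersetCard (j - R.card) (A \ R)]
  refine Finset.card_bij' (fun T _ => T \ R) (fun T' _ => T' ∪ R) ?_ ?_ ?_ ?_
  · intro T hT
    rw [mem_filter, mem_powersetCard] at hT
    rw [mem_powersetCard]
    exact ⟨sdiff_subset_sdiff hT.1.1 Subset.rfl,
      by rw [card_sdiff_of_subset hT.2, hT.1.2]⟩
  · intro T' hT'
    rw [mem_powersetCard] at hT'
    have hd : Disjoint T' R := disjoint_of_subset_left hT'.1 sdiff_disjoint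
    rw [mem_filter, mem_powersetCard]
    refine ⟨⟨union_subset (hT'.1.trans sdiff_subset) hR, ?_⟩, subset_union_right⟩
    rw [card_union_of_disjoint hd, hT'.2]
    omega
  · intro T hT
    rw [mem_filter] at hT
    exact sdiff_union_of_subset hT.2
  · intro T' hT'
    rw [mem_powersetCard] at hT'
    have hd : Disjoint T' R := disjoint_of_subset_left hT'.1 sdiff_disjoint
    rw [union_sdiff_right, sdiff_eq_self_of_disjoint hd]

include hS

lemma countG' {K₀ : Finset Ω} (hK₀ : K₀ ∈ S) (R E : Finset Ω) (hR : R ⊆ K₀)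
    (hE : Disjoint E K₀) (hEne : E.Nonempty) {j : ℕ} (hj : j = 3 ∨ j = 4)
    (hrj : R.card ≤ j) (hEc : E.card = 5 - j) :
    (S.filter fun K => E ∪ R ⊆ K ∧ (K ∩ K₀).card = 4).card
        * (4 - R.card).choose (j - R.card)
      = (8 - R.card).choose (j - R.card) := by
  set 𝒯 := (K₀.powersetCard j).filter (fun T => R ⊆ T) with h𝒯def
  have h𝒯 : 𝒯.card = (8 - R.card).choose (j - R.card) := by
    rw [h𝒯def, card_supersets K₀ R hR hrj, hS.2.1 K₀ hK₀]
  have h := dc' S 𝒯 (fun K T => ((K ∩ K₀).card = 4 ∧ E ⊆ K) ∧ T ⊆ K)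
  have hL : ∀ T ∈ 𝒯, (S.filter fun K => ((K ∩ K₀).card = 4 ∧ E ⊆ K) ∧ T ⊆ K).card = 1 := by
    intro T hT
    rw [h𝒯def, mem_filter, mem_powersetCard] at hT
    obtain ⟨⟨hTK₀, hTj⟩, _⟩ := hT
    have hdET : Disjoint E T := hE.mono_right hTK₀
    have hA5 : (E ∪ T).card = 5 := by
      rw [card_union_of_disjoint hdET, hEc, hTj]; omega
    obtain ⟨W, ⟨hWS, hWA⟩, huniq⟩ := hS.2.2 (E ∪ T) hA5
    obtain ⟨hEW, hTW⟩ := union_subset_iff.1 hWA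
    have hWne : W ≠ K₀ := by
      obtain ⟨e, he⟩ := hEne
      intro hWK₀
      exact (Finset.disjoint_left.1 hE he) (hWK₀ ▸ hEW he)
    have h4 : (W ∩ K₀).card = 4 := by
      have hge : j ≤ (W ∩ K₀).card := hTj ▸ card_le_card (subset_inter hTW hTK₀)
      have hle := inter_le4' hS hWS hK₀ hWne
      have hne3 := no3' hS hWS hK₀ hWne
      omega
    rw [Finset.card_eq_one]
    refine ⟨W, ?_⟩
    ext L
    simp only [mem_filter, mem_singleton]
    constructor
    · rintro ⟨hLS, ⟨_, hEL⟩, hTL⟩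
      exact huniq L ⟨hLS, union_subset hEL hTL⟩
    · rintro rfl
      exact ⟨hWS, ⟨h4, hEW⟩, hTW⟩
  have hLsum : ∑ T ∈ 𝒯, (S.filter fun K => ((K ∩ K₀).card = 4 ∧ E ⊆ K) ∧ T ⊆ K).card
      = (8 - R.card).choose (j - R.card) := by
    rw [Finset.sum_congr rfl hL, Finset.sum_const, smul_eq_mul, mul_one, h𝒯]
  have hRterm : ∀ K ∈ S, (𝒯.filter fun T => ((K ∩ K₀).card = 4 ∧ E ⊆ K) ∧ T ⊆ K).card
      = if E ∪ R ⊆ K ∧ (K ∩ K₀).card = 4 then (4 - R.card).choose (j - R.card) else 0 := by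
    intro K hK
    by_cases hc : (K ∩ K₀).card = 4 ∧ E ⊆ K
    · by_cases hRK : R ⊆ K
      · rw [if_pos ⟨union_subset hc.2 hRK, hc.1⟩]
        have he : 𝒯.filter (fun T => ((K ∩ K₀).card = 4 ∧ E ⊆ K) ∧ T ⊆ K)
            = ((K ∩ K₀).powersetCard j).filter (fun T => R ⊆ T) := by
          ext T
          simp only [h𝒯def, mem_filter, mem_powersetCard, subset_inter_iff]
          tauto
        rw [he, card_supersets _ R (subset_inter hRK hR) hrj, hc.1]
      · rw [if_neg (by intro hcon; exact hRK ((subset_union_right).trans hcon.1))]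
        rw [Finset.card_eq_zero, Finset.filter_eq_empty_iff]
        intro T hT
        rw [h𝒯def, mem_filter] at hT
        intro ⟨_, hTK⟩
        exact hRK (hT.2.trans hTK)
    · rw [if_neg (by intro hcon; exact hc ⟨hcon.2, (subset_union_left).trans hcon.1⟩)]
      rw [Finset.card_eq_zero, Finset.filter_eq_empty_iff]
      intro T _
      tauto
  have hRsum : ∑ K ∈ S, (𝒯.filter fun T => ((K ∩ K₀).card = 4 ∧ E ⊆ K) ∧ T ⊆ K).card
      = (S.filter fun K => E ∪ R ⊆ K ∧ (K ∩ K₀).card = 4).card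
        * (4 - R.card).choose (j - R.card) := by
    rw [Finset.sum_congr rfl hRterm, ← Finset.sum_filter, Finset.sum_const, smul_eq_mul]
  rw [← hLsum, h, hRsum]

end P3

section P4
variable {S : Finset (Finset Ω)} (hS : IsSteinerSystem_5_8_24 S)
  {pinf p0 p1 : Ω} (h01 : p0 ≠ p1) (hinf0 : pinf ≠ p0) (hinf1 : pinf ≠ p1)
  {K₀ : Finset Ω} (hK₀S : K₀ ∈ S)
  (h0K : p0 ∈ K₀) (hinfK : pinf ∉ K₀) (h1K : p1 ∉ K₀)

include hS hK₀S h0K hinfK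

lemma cnt35' :
    (S.filter fun K => (pinf ∈ K ∧ p0 ∈ K) ∧ (K ∩ K₀).card = 4).card = 35 := by
  have h := countG' hS hK₀S {p0} {pinf} (by simpa using h0K)
    (by simp [disjoint_singleton_left, hinfK]) ⟨pinf, mem_singleton_self _⟩
    (Or.inr rfl) (by simp) (by simp)
  rw [show (S.filter fun K => {pinf} ∪ {p0} ⊆ K ∧ (K ∩ K₀).card = 4)
      = (S.filter fun K => (pinf ∈ K ∧ p0 ∈ K) ∧ (K ∩ K₀).card = 4) from
    filter_congr (by intro K _; simp [union_subset_iff, insert_subset_iff])] at h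
  simpa [show Nat.choose 7 3 = 35 by decide] using h

include h1K hinf1 in
lemma cnt7x :
    (S.filter fun K => (pinf ∈ K ∧ p0 ∈ K ∧ p1 ∈ K) ∧ (K ∩ K₀).card = 4).card = 7 := by
  have h := countG' hS hK₀S {p0} {pinf, p1} (by simpa using h0K)
    (by simp [Finset.disjoint_left, hinfK, h1K]) ⟨pinf, by simp⟩
    (Or.inl rfl) (by simp) (by rw [card_insert_of_notMem (by simp [hinf1]), card_singleton])
  rw [show (S.filter fun K => {pinf, p1} ∪ {p0} ⊆ K ∧ (K ∩ K₀).card = 4)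
      = (S.filter fun K => (pinf ∈ K ∧ p0 ∈ K ∧ p1 ∈ K) ∧ (K ∩ K₀).card = 4) from
    filter_congr (by intro K _; simp [union_subset_iff, insert_subset_iff]; tauto)] at h
  simp only [card_singleton] at h
  have c1 : (4 - 1).choose (3 - 1) = 3 := by decide
  have c2 : (8 - 1).choose (3 - 1) = 21 := by decide
  rw [c1, c2] at h
  omega

lemma cnt15' (t : Ω) (ht : t ∈ K₀) (ht0 : t ≠ p0) :
    (S.filter fun K => (pinf ∈ K ∧ p0 ∈ K ∧ t ∈ K) ∧ (K ∩ K₀).card = 4).card = 15 := by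
  have hc2 : ({p0, t} : Finset Ω).card = 2 := by
    rw [card_insert_of_notMem (by simp only [mem_singleton]; exact fun h => ht0 h.symm),
      card_singleton]
  have h := countG' hS hK₀S {p0, t} {pinf} (by simp [insert_subset_iff, h0K, ht])
    (by simp [disjoint_singleton_left, hinfK]) ⟨pinf, mem_singleton_self _⟩
    (Or.inr rfl) (by rw [hc2]; norm_num) (by simp)
  rw [show (S.filter fun K => {pinf} ∪ {p0, t} ⊆ K ∧ (K ∩ K₀).card = 4)
      = (S.filter fun K => (pinf ∈ K ∧ p0 ∈ K ∧ t ∈ K) ∧ (K ∩ K₀).card = 4) from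
    filter_congr (by intro K _; simp [union_subset_iff, insert_subset_iff]; tauto)] at h
  rw [hc2] at h
  have c1 : (4 - 2).choose (4 - 2) = 1 := by decide
  have c2 : (8 - 2).choose (4 - 2) = 15 := by decide
  rw [c1, c2] at h
  omega

include h1K hinf1 in
lemma cnt3' (t : Ω) (ht : t ∈ K₀) (ht0 : t ≠ p0) :
    (S.filter fun K =>
      (pinf ∈ K ∧ p0 ∈ K ∧ p1 ∈ K ∧ t ∈ K) ∧ (K ∩ K₀).card = 4).card = 3 := by
  have hc2 : ({p0, t} : Finset Ω).card = 2 := by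
    rw [card_insert_of_notMem (by simp only [mem_singleton]; exact fun h => ht0 h.symm),
      card_singleton]
  have h := countG' hS hK₀S {p0, t} {pinf, p1} (by simp [insert_subset_iff, h0K, ht])
    (by simp [Finset.disjoint_left, hinfK, h1K]) ⟨pinf, by simp⟩
    (Or.inl rfl) (by rw [hc2]; norm_num)
    (by rw [card_insert_of_notMem (by simp [hinf1]), card_singleton])
  rw [show (S.filter fun K => {pinf, p1} ∪ {p0, t} ⊆ K ∧ (K ∩ K₀).card = 4)
      = (S.filter fun K =>
        (pinf ∈ K ∧ p0 ∈ K ∧ p1 ∈ K ∧ t ∈ K) ∧ (K ∩ K₀).card = 4) from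
    filter_congr (by intro K _; simp [union_subset_iff, insert_subset_iff]; tauto)] at h
  rw [hc2] at h
  have c1 : (4 - 2).choose (3 - 2) = 2 := by decide
  have c2 : (8 - 2).choose (3 - 2) = 6 := by decide
  rw [c1, c2] at h
  omega

lemma cnt7u' (u : Ω) (hu : u ∉ K₀) (hupinf : u ≠ pinf) :
    (S.filter fun K => (pinf ∈ K ∧ p0 ∈ K ∧ u ∈ K) ∧ (K ∩ K₀).card = 4).card = 7 := by
  have h := countG' hS hK₀S {p0} {pinf, u} (by simpa using h0K)
    (by simp [Finset.disjoint_left, hinfK, hu]) ⟨pinf, by simp⟩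
    (Or.inl rfl) (by simp)
    (by rw [card_insert_of_notMem (by simp only [mem_singleton]; exact fun h => hupinf h.symm),
      card_singleton])
  rw [show (S.filter fun K => {pinf, u} ∪ {p0} ⊆ K ∧ (K ∩ K₀).card = 4)
      = (S.filter fun K => (pinf ∈ K ∧ p0 ∈ K ∧ u ∈ K) ∧ (K ∩ K₀).card = 4) from
    filter_congr (by intro K _; simp [union_subset_iff, insert_subset_iff]; tauto)] at h
  simp only [card_singleton] at h
  have c1 : (4 - 1).choose (3 - 1) = 3 := by decide
  have c2 : (8 - 1).choose (3 - 1) = 21 := by decide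
  rw [c1, c2] at h
  omega
end P4

section P5
variable {S : Finset (Finset Ω)} (hS : IsSteinerSystem_5_8_24 S)
  {pinf p0 p1 : Ω} (h01 : p0 ≠ p1) (hinf0 : pinf ≠ p0) (hinf1 : pinf ≠ p1)
  {K₀ : Finset Ω} (hK₀S : K₀ ∈ S)
  (h0K : p0 ∈ K₀) (hinfK : pinf ∉ K₀) (h1K : p1 ∉ K₀)

include hS h01 hinf0 hinf1 hK₀S h0K hinfK h1K

lemma m_ge_one' (u : Ω) (hu : u ∉ K₀) (hupinf : u ≠ pinf) (hup1 : u ≠ p1) :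
    1 ≤ (S.filter fun K =>
      (pinf ∈ K ∧ p0 ∈ K ∧ p1 ∈ K ∧ u ∈ K) ∧ (K ∩ K₀).card = 4).card := by
  by_contra hcon
  push_neg at hcon
  interval_cases h : (S.filter fun K =>
      (pinf ∈ K ∧ p0 ∈ K ∧ p1 ∈ K ∧ u ∈ K) ∧ (K ∩ K₀).card = 4).card
  rw [Finset.card_eq_zero, Finset.filter_eq_empty_iff] at h
  set Q : Finset Ω := insert pinf (insert p0 (insert p1 {u})) with hQdef
  have hu0 : u ≠ p0 := fun he => hu (he ▸ h0K)
  have hQmem : ∀ K : Finset Ω, Q ⊆ K ↔ pinf ∈ K ∧ p0 ∈ K ∧ p1 ∈ K ∧ u ∈ K := by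
    intro K
    simp [hQdef, insert_subset_iff]
  have hQ4 : Q.card = 4 := by
    rw [hQdef, card_insert_of_notMem (by simp [hinf0, hinf1, Ne.symm hupinf]),
      card_insert_of_notMem (by simp [h01, Ne.symm hu0]),
      card_insert_of_notMem (by simp [Ne.symm hup1]), card_singleton]
  have hdc := dc' S (K₀.erase p0) (fun K c => Q ⊆ K ∧ c ∈ K)
  have hLsum : ∑ c ∈ K₀.erase p0, (S.filter fun K => Q ⊆ K ∧ c ∈ K).card = 7 := by
    have hterm : ∀ c ∈ K₀.erase p0, (S.filter fun K => Q ⊆ K ∧ c ∈ K).card = 1 := by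
      intro c hc
      rw [mem_erase] at hc
      have hcQ : c ∉ Q := by
        simp only [hQdef, mem_insert, mem_singleton]
        push_neg
        exact ⟨fun he => hinfK (he ▸ hc.2), hc.1,
          fun he => h1K (he ▸ hc.2), fun he => hu (he ▸ hc.2)⟩
      rw [show (S.filter fun K => Q ⊆ K ∧ c ∈ K) = (S.filter fun K => insert c Q ⊆ K) from
        filter_congr (by intro K _; simp [insert_subset_iff]; tauto)]
      exact lam5' hS _ (by rw [card_insert_of_notMem hcQ, hQ4])
    rw [Finset.sum_congr rfl hterm, Finset.sum_const, smul_eq_mul, mul_one,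
      card_erase_of_mem h0K, hS.2.1 K₀ hK₀S]
  set T := S.filter (fun K => Q ⊆ K) with hTdef
  have hTcard : T.card = 5 := lam4' hS Q hQ4
  have hRres : ∑ K ∈ S, ((K₀.erase p0).filter (fun c => Q ⊆ K ∧ c ∈ K)).card
      = ∑ K ∈ T, ((K₀.erase p0).filter (fun c => Q ⊆ K ∧ c ∈ K)).card := by
    refine (Finset.sum_subset (filter_subset _ _) ?_).symm
    intro K hKS hKT
    have hnQ : ¬ Q ⊆ K := fun hQK => hKT (mem_filter.2 ⟨hKS, hQK⟩)
    rw [Finset.card_eq_zero, Finset.filter_eq_empty_iff]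
    intro c _
    tauto
  have hbound : ∀ K ∈ T, ((K₀.erase p0).filter (fun c => Q ⊆ K ∧ c ∈ K)).card ≤ 1 := by
    intro K hKT
    rw [hTdef, mem_filter] at hKT
    obtain ⟨hKS, hQK⟩ := hKT
    obtain ⟨hpinfK, hp0K, hp1K, huK⟩ := (hQmem K).1 hQK
    have hKne : K ≠ K₀ := fun he => hinfK (he ▸ hpinfK)
    have hne4 : (K ∩ K₀).card ≠ 4 := by
      intro h4
      exact h hKS ⟨⟨hpinfK, hp0K, hp1K, huK⟩, h4⟩
    have hle := inter_le4' hS hKS hK₀S hKne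
    have hne3 := no3' hS hKS hK₀S hKne
    have hset : (K₀.erase p0).filter (fun c => Q ⊆ K ∧ c ∈ K) = (K ∩ K₀).erase p0 := by
      ext x
      simp only [mem_filter, mem_erase, mem_inter, hQK, true_and]
      tauto
    rw [hset, card_erase_of_mem (mem_inter.2 ⟨hp0K, h0K⟩)]
    omega
  have : (7 : ℕ) ≤ 5 := by
    calc (7 : ℕ) = ∑ K ∈ T, ((K₀.erase p0).filter (fun c => Q ⊆ K ∧ c ∈ K)).card := by
          rw [← hRres, ← hdc, hLsum]
      _ ≤ T.card * 1 := Finset.sum_le_card_nsmul _ _ 1 hbound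
      _ = 5 := by rw [hTcard, mul_one]
  omega

lemma m_eq_one' (u : Ω) (hu : u ∉ K₀) (hupinf : u ≠ pinf) (hup1 : u ≠ p1) :
    (S.filter fun K =>
      (pinf ∈ K ∧ p0 ∈ K ∧ p1 ∈ K ∧ u ∈ K) ∧ (K ∩ K₀).card = 4).card = 1 := by
  set U : Finset Ω := (K₀ᶜ.erase pinf).erase p1 with hUdef
  have hUmem : ∀ x : Ω, x ∈ U ↔ x ∉ K₀ ∧ x ≠ pinf ∧ x ≠ p1 := by
    intro x
    simp only [hUdef, mem_erase, mem_compl]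
    tauto
  have hUcard : U.card = 14 := by
    rw [hUdef, card_erase_of_mem (by simp [mem_erase, mem_compl, h1K, Ne.symm hinf1]),
      card_erase_of_mem (by simp [mem_compl, hinfK]), card_compl, hS.1, hS.2.1 K₀ hK₀S]
  set m : Ω → ℕ := fun v => (S.filter fun K =>
      (pinf ∈ K ∧ p0 ∈ K ∧ p1 ∈ K ∧ v ∈ K) ∧ (K ∩ K₀).card = 4).card with hmdef
  have hdc := dc' S U (fun K v => ((pinf ∈ K ∧ p0 ∈ K ∧ p1 ∈ K) ∧ (K ∩ K₀).card = 4) ∧ v ∈ K)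
  have hLsum : ∑ v ∈ U, m v = 14 := by
    have he : ∀ v ∈ U, (S.filter fun K =>
        ((pinf ∈ K ∧ p0 ∈ K ∧ p1 ∈ K) ∧ (K ∩ K₀).card = 4) ∧ v ∈ K).card = m v := by
      intro v _
      rw [hmdef]
      exact congrArg card (filter_congr (by intro K _; tauto))
    rw [← Finset.sum_congr rfl he]
    rw [hdc]
    set T := S.filter (fun K => (pinf ∈ K ∧ p0 ∈ K ∧ p1 ∈ K) ∧ (K ∩ K₀).card = 4) with hTdef
    have hres : ∑ K ∈ S, (U.filter (fun v =>
        ((pinf ∈ K ∧ p0 ∈ K ∧ p1 ∈ K) ∧ (K ∩ K₀).card = 4) ∧ v ∈ K)).card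
        = ∑ K ∈ T, (U.filter (fun v =>
        ((pinf ∈ K ∧ p0 ∈ K ∧ p1 ∈ K) ∧ (K ∩ K₀).card = 4) ∧ v ∈ K)).card := by
      refine (Finset.sum_subset (filter_subset _ _) ?_).symm
      intro K hKS hKT
      have : ¬((pinf ∈ K ∧ p0 ∈ K ∧ p1 ∈ K) ∧ (K ∩ K₀).card = 4) :=
        fun hc => hKT (mem_filter.2 ⟨hKS, hc⟩)
      rw [Finset.card_eq_zero, Finset.filter_eq_empty_iff]
      intro v _
      tauto
    have hterm : ∀ K ∈ T, (U.filter (fun v =>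
        ((pinf ∈ K ∧ p0 ∈ K ∧ p1 ∈ K) ∧ (K ∩ K₀).card = 4) ∧ v ∈ K)).card = 2 := by
      intro K hKT
      rw [hTdef, mem_filter] at hKT
      obtain ⟨hKS, ⟨hpinfK, hp0K, hp1K⟩, h4⟩ := hKT
      have hset : U.filter (fun v =>
          ((pinf ∈ K ∧ p0 ∈ K ∧ p1 ∈ K) ∧ (K ∩ K₀).card = 4) ∧ v ∈ K)
          = ((K \ K₀).erase pinf).erase p1 := by
        ext x
        simp only [mem_filter, hUmem, mem_erase, mem_sdiff, hpinfK, hp0K, hp1K, h4,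
          and_true, true_and]
        tauto
      have hsd : (K \ K₀).card = 4 := by
        have := Finset.card_inter_add_card_sdiff K K₀
        rw [h4, hS.2.1 K hKS] at this
        omega
      rw [hset, card_erase_of_mem (by simp [mem_erase, mem_sdiff, hp1K, h1K, Ne.symm hinf1]),
        card_erase_of_mem (by simp [mem_sdiff, hpinfK, hinfK]), hsd]
    rw [hres, Finset.sum_congr rfl hterm, Finset.sum_const, smul_eq_mul]
    rw [show T.card = 7 from cnt7x hS hinf1 hK₀S h0K hinfK h1K]
  have hge : ∀ v ∈ U, 1 ≤ m v := by
    intro v hv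
    obtain ⟨hv1, hv2, hv3⟩ := (hUmem v).1 hv
    exact m_ge_one' hS h01 hinf0 hinf1 hK₀S h0K hinfK h1K v hv1 hv2 hv3
  have huU : u ∈ U := (hUmem u).2 ⟨hu, hupinf, hup1⟩
  by_contra hne
  have h2 : 2 ≤ m u := by
    have h1 := hge u huU
    have hne' : m u ≠ 1 := hne
    omega
  have hlt : ∑ v ∈ U, (1 : ℕ) < ∑ v ∈ U, m v := by
    refine Finset.sum_lt_sum hge ⟨u, huU, ?_⟩
    omega
  rw [hLsum, Finset.sum_const, smul_eq_mul, mul_one, hUcard] at hlt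
  omega

end P5

end Cox

theorem coxeter_graph_cubic {Ω : Type*} [Fintype Ω] [DecidableEq Ω]
    (S : Finset (Finset Ω)) (hS : IsSteinerSystem_5_8_24 S)
    (pinf p0 p1 : Ω) (h01 : p0 ≠ p1) (hinf0 : pinf ≠ p0) (hinf1 : pinf ≠ p1)
    (K₀ : Finset Ω) (hK₀S : K₀ ∈ S)
    (h0K : p0 ∈ K₀) (hinfK : pinf ∉ K₀) (h1K : p1 ∉ K₀)
    (F : Finset (Finset Ω))
    (hF : F = S.filter fun K => pinf ∈ K ∧ p0 ∈ K ∧ p1 ∉ K ∧ (K ∩ K₀).card = 4) :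
    ∀ K ∈ F,
      (F.filter fun K' => K' ≠ K ∧ (K ∩ K').card = 2).card = 3 ∧
      (F.filter fun K' => K' ≠ K ∧ (K ∩ K').card = 4).card = 24 := by
  intro K hKF
  have hKmem := hKF
  rw [hF, mem_filter] at hKmem
  obtain ⟨hKS, hKinf, hK0, hK1, hK4⟩ := hKmem
  have hK8 : K.card = 8 := hS.2.1 K hKS
  -- |F| = 28
  have hF28 : F.card = 28 := by
    have h35 := Cox.cnt35' hS hK₀S h0K hinfK (pinf := pinf)
    have hsplit := Finset.card_filter_add_card_filter_not
      (s := S.filter fun K => (pinf ∈ K ∧ p0 ∈ K) ∧ (K ∩ K₀).card = 4)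
      (p := fun K => p1 ∈ K)
    rw [filter_filter, filter_filter] at hsplit
    rw [show ((S.filter fun K => ((pinf ∈ K ∧ p0 ∈ K) ∧ (K ∩ K₀).card = 4) ∧ p1 ∈ K))
        = (S.filter fun K => (pinf ∈ K ∧ p0 ∈ K ∧ p1 ∈ K) ∧ (K ∩ K₀).card = 4) from
      filter_congr (by intro L _; tauto)] at hsplit
    rw [show ((S.filter fun K => ((pinf ∈ K ∧ p0 ∈ K) ∧ (K ∩ K₀).card = 4) ∧ ¬ p1 ∈ K))
        = (S.filter fun K => pinf ∈ K ∧ p0 ∈ K ∧ p1 ∉ K ∧ (K ∩ K₀).card = 4) from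
      filter_congr (by intro L _; tauto)] at hsplit
    rw [Cox.cnt7x hS hinf1 hK₀S h0K hinfK h1K, h35, ← hF] at hsplit
    omega
  -- the inner 6 points of K
  set D : Finset Ω := (K.erase pinf).erase p0 with hDdef
  have hDmem : ∀ x, x ∈ D ↔ x ≠ p0 ∧ x ≠ pinf ∧ x ∈ K := by
    intro x; simp [hDdef, mem_erase, and_assoc]
  have hDcard : D.card = 6 := by
    rw [hDdef, card_erase_of_mem (mem_erase.2 ⟨Ne.symm hinf0, hK0⟩),
      card_erase_of_mem hKinf, hK8]
  have hDin : (D.filter (· ∈ K₀)).card = 3 := by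
    have he : D.filter (· ∈ K₀) = (K ∩ K₀).erase p0 := by
      ext x
      simp only [mem_filter, hDmem, mem_erase, mem_inter]
      constructor
      · rintro ⟨⟨h1, h2, h3⟩, h4⟩; exact ⟨h1, h3, h4⟩
      · rintro ⟨h1, h3, h4⟩; exact ⟨⟨h1, fun he => hinfK (he ▸ h4), h3⟩, h4⟩
    rw [he, card_erase_of_mem (mem_inter.2 ⟨hK0, h0K⟩), hK4]
  have hDout : (D.filter (· ∉ K₀)).card = 3 := by
    have := Finset.card_filter_add_card_filter_not (s := D) (p := (· ∈ K₀))
    rw [hDin, hDcard] at this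
    omega
  -- counts of members of F through an extra point p of D
  have hKinF : ∀ p ∈ D, K ∈ F.filter (fun K' => p ∈ K') := by
    intro p hp
    exact mem_filter.2 ⟨hKF, ((hDmem p).1 hp).2.2⟩
  have hpt : ∀ p ∈ D, (F.filter (fun K' => p ∈ K')).card = if p ∈ K₀ then 12 else 6 := by
    intro p hp
    obtain ⟨hpp0, hppinf, hpK⟩ := (hDmem p).1 hp
    have hbase : F.filter (fun K' => p ∈ K')
        = S.filter (fun K' => ((pinf ∈ K' ∧ p0 ∈ K' ∧ p ∈ K') ∧ (K' ∩ K₀).card = 4)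
            ∧ p1 ∉ K') := by
      rw [hF, filter_filter]
      exact filter_congr (by intro L _; tauto)
    have hsplit := Finset.card_filter_add_card_filter_not
      (s := S.filter fun K' => (pinf ∈ K' ∧ p0 ∈ K' ∧ p ∈ K') ∧ (K' ∩ K₀).card = 4)
      (p := fun K' => p1 ∈ K')
    rw [filter_filter, filter_filter] at hsplit
    rw [show ((S.filter fun K' => ((pinf ∈ K' ∧ p0 ∈ K' ∧ p ∈ K') ∧ (K' ∩ K₀).card = 4)
          ∧ p1 ∈ K'))
        = (S.filter fun K' => (pinf ∈ K' ∧ p0 ∈ K' ∧ p1 ∈ K' ∧ p ∈ K')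
            ∧ (K' ∩ K₀).card = 4) from
      filter_congr (by intro L _; tauto)] at hsplit
    by_cases hpK₀ : p ∈ K₀
    · rw [if_pos hpK₀]
      rw [Cox.cnt15' hS hK₀S h0K hinfK p hpK₀ hpp0,
        Cox.cnt3' hS hinf1 hK₀S h0K hinfK h1K p hpK₀ hpp0] at hsplit
      rw [hbase]
      omega
    · rw [if_neg hpK₀]
      have hpp1 : p ≠ p1 := fun he => hK1 (he ▸ hpK)
      rw [Cox.cnt7u' hS hK₀S h0K hinfK p hpK₀ hppinf,
        Cox.m_eq_one' hS h01 hinf0 hinf1 hK₀S h0K hinfK h1K p hpK₀ hppinf hpp1] at hsplit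
      rw [hbase]
      omega
  have hpt' : ∀ p ∈ D, ((F.erase K).filter (fun K' => p ∈ K')).card
      = if p ∈ K₀ then 11 else 5 := by
    intro p hp
    have he : (F.erase K).filter (fun K' => p ∈ K') = (F.filter (fun K' => p ∈ K')).erase K := by
      ext L
      simp only [mem_filter, mem_erase]
      tauto
    rw [he, card_erase_of_mem (hKinF p hp), hpt p hp]
    by_cases hpK₀ : p ∈ K₀ <;> simp [hpK₀]
  -- double count
  have hdc := Cox.dc' (F.erase K) D (fun K' p => p ∈ K')
  have hLsum : ∑ p ∈ D, ((F.erase K).filter (fun K' => p ∈ K')).card = 48 := by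
    rw [Finset.sum_congr rfl hpt', Finset.sum_ite, Finset.sum_const, Finset.sum_const,
      hDin, hDout]
    norm_num
  -- facts about each K' in F.erase K
  have hfacts : ∀ K' ∈ F.erase K, (K ∩ K').card = 2 + (D.filter (· ∈ K')).card
      ∧ ((D.filter (· ∈ K')).card = 0 ∨ (D.filter (· ∈ K')).card = 2) := by
    intro K' hK'
    rw [mem_erase] at hK'
    obtain ⟨hK'ne, hK'F⟩ := hK'
    rw [hF, mem_filter] at hK'F
    obtain ⟨hK'S, hK'inf, hK'0, hK'1, hK'4⟩ := hK'F
    have hset : K ∩ K' = insert pinf (insert p0 (D.filter (· ∈ K'))) := by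
      ext x
      simp only [mem_inter, mem_insert, mem_filter, hDmem]
      constructor
      · rintro ⟨hxK, hxK'⟩
        by_cases h1 : x = pinf
        · exact Or.inl h1
        by_cases h2 : x = p0
        · exact Or.inr (Or.inl h2)
        · exact Or.inr (Or.inr ⟨⟨h2, h1, hxK⟩, hxK'⟩)
      · rintro (rfl | rfl | ⟨⟨_, _, hxK⟩, hxK'⟩)
        · exact ⟨hKinf, hK'inf⟩
        · exact ⟨hK0, hK'0⟩
        · exact ⟨hxK, hxK'⟩
    have hb : p0 ∉ D.filter (· ∈ K') :=
      fun hmem => (((hDmem p0).1 (mem_filter.1 hmem).1).1) rfl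
    have ha : pinf ∉ insert p0 (D.filter (· ∈ K')) := by
      intro hmem
      rcases mem_insert.1 hmem with h | h
      · exact hinf0 h
      · exact (((hDmem pinf).1 (mem_filter.1 h).1).2.1) rfl
    have hcard : (K ∩ K').card = 2 + (D.filter (· ∈ K')).card := by
      rw [hset, card_insert_of_notMem ha, card_insert_of_notMem hb]
      omega
    have hKne : K ≠ K' := fun he => hK'ne he.symm
    have hle := Cox.inter_le4' hS hKS hK'S hKne
    have hne3 := Cox.no3' hS hKS hK'S hKne
    exact ⟨hcard, by omega⟩
  have hRsum : ∑ K' ∈ F.erase K, (D.filter (· ∈ K')).card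
      = 2 * ((F.erase K).filter (fun K' => (K ∩ K').card = 4)).card := by
    have hterm : ∀ K' ∈ F.erase K, (D.filter (· ∈ K')).card
        = if (K ∩ K').card = 4 then 2 else 0 := by
      intro K' hK'
      obtain ⟨h1, h2⟩ := hfacts K' hK'
      by_cases h4 : (K ∩ K').card = 4
      · rw [if_pos h4]; omega
      · rw [if_neg h4]; omega
    rw [Finset.sum_congr rfl hterm, Finset.sum_ite, Finset.sum_const, Finset.sum_const,
      smul_eq_mul, smul_eq_mul, mul_comm, mul_zero, add_zero]
  have hy : ((F.erase K).filter (fun K' => (K ∩ K').card = 4)).card = 24 := by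
    have : (48 : ℕ) = 2 * ((F.erase K).filter (fun K' => (K ∩ K').card = 4)).card := by
      rw [← hRsum, ← hdc, hLsum]
    omega
  have hy' : (F.filter fun K' => K' ≠ K ∧ (K ∩ K').card = 4)
      = (F.erase K).filter (fun K' => (K ∩ K').card = 4) := by
    ext L
    simp only [mem_filter, mem_erase]
    tauto
  have hx : (F.filter fun K' => K' ≠ K ∧ (K ∩ K').card = 2).card = 3 := by
    have hx' : (F.filter fun K' => K' ≠ K ∧ (K ∩ K').card = 2)
        = (F.erase K).filter (fun K' => ¬ (K ∩ K').card = 4) := by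
      ext L
      simp only [mem_filter, mem_erase]
      constructor
      · rintro ⟨hLF, hLne, hL2⟩
        exact ⟨⟨hLne, hLF⟩, by omega⟩
      · rintro ⟨⟨hLne, hLF⟩, hL4⟩
        obtain ⟨h1, h2⟩ := hfacts L (mem_erase.2 ⟨hLne, hLF⟩)
        exact ⟨hLF, hLne, by omega⟩
    have hsplit := Finset.card_filter_add_card_filter_not
      (s := F.erase K) (p := fun K' => (K ∩ K').card = 4)
    rw [hy, card_erase_of_mem hKF, hF28] at hsplit
    rw [hx']
    omega
  exact ⟨hx, by rw [hy', hy]⟩
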